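/- Consider an interface parameterized in local (ξ,η) coordinates as Γ = {(χ(s), s)} with χ twice continuously differentiable, χ(0) = 0, χ'(0) = 0, χ'' := χ''(0). Let u⁺, u⁻ be C², let a_ij±(ξ,η) be C¹ symmetric positive-definite variable coefficients on each side with a₁₁⁺ > 0 at the origin, let w(s) := [u](s) be C² and let v(s) be the flux jump defined by √(1 + χ'(s)²) v(s) = [(a₁₁ − χ' a₁₂) u_ξ](s) + [(a₁₂ − χ' a₂₂) u_η](s), assumed C¹. Define c₃± = ∂a₁₁±/∂η − χ'' a₁₂± and c₄± = ∂a₁₂±/∂η − χ'' a₂₂±, with everything evaluated one-sidedly at the origin, and [g] := g⁺ − g⁻ there. Then u_ξη⁺ = ((c₃⁻[a₁₁] − a₁₁⁻[c₃] − χ'' a₁₂⁺[a₁₁])/(a₁₁⁺)²) u_ξ⁻ + ((c₃⁺[a₁₂] − a₁₁⁺[c₄] − χ'' a₁₂⁺[a₁₂])/(a₁₁⁺)²) u_η⁻ − ([a₁₂]/a₁₁⁺) u_ηη⁻ + (a₁₁⁻/a₁₁⁺) u_ξη⁻ + ((c₃⁺ a₁₂⁺ − a₁₁⁺ c₄⁺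 − χ'' (a₁₂⁺)²)/(a₁₁⁺)²) w'(0) − (a₁₂⁺/a₁₁⁺) w''(0) + ((χ'' a₁₂⁺ − c₃⁺)/(a₁₁⁺)²) v(0) + v'(0)/a₁₁⁺. -/

import Mathlib

open Real Filter Topology Matrix

/-- Partial derivative with respect to the first coordinate (`ξ`). -/
noncomputable def pd1 (u : ℝ × ℝ → ℝ) (p : ℝ × ℝ) : ℝ := fderiv ℝ u p (1, 0)

/-- Partial derivative with respect to the second coordinate (`η`). -/
noncomputable def pd2 (u : ℝ × ℝ → ℝ) (p : ℝ × ℝ) : ℝ := fderiv ℝ u p (0, 1)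

lemma clm_decomp (L : ℝ × ℝ →L[ℝ] ℝ) (a : ℝ) :
    L (a, 1) = a * L (1, 0) + L (0, 1) := by
  have h : ((a, (1:ℝ)) : ℝ × ℝ) = a • ((1:ℝ), (0:ℝ)) + ((0:ℝ), (1:ℝ)) := by
    simp [Prod.ext_iff]
  rw [h, map_add, _root_.map_smul, smul_eq_mul]

lemma contDiff_pd1 {u : ℝ × ℝ → ℝ} (hu : ContDiff ℝ 2 u) : ContDiff ℝ 1 (pd1 u) := by
  unfold pd1
  exact (hu.fderiv_right (by norm_num)).clm_apply contDiff_const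

lemma contDiff_pd2 {u : ℝ × ℝ → ℝ} (hu : ContDiff ℝ 2 u) : ContDiff ℝ 1 (pd2 u) := by
  unfold pd2
  exact (hu.fderiv_right (by norm_num)).clm_apply contDiff_const

lemma hasDerivAt_comp_curve {f : ℝ × ℝ → ℝ} (hf : Differentiable ℝ f) {χ : ℝ → ℝ} {s : ℝ}
    (hχ : DifferentiableAt ℝ χ s) :
    HasDerivAt (fun t => f (χ t, t)) (deriv χ s * pd1 f (χ s, s) + pd2 f (χ s, s)) s := by
  have hcurve : HasDerivAt (fun t => ((χ t, t) : ℝ × ℝ)) (deriv χ s, 1) s :=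
    hχ.hasDerivAt.prodMk (hasDerivAt_id s)
  have h := HasFDerivAt.comp_hasDerivAt (l := f) (f := fun t => ((χ t, t) : ℝ × ℝ)) (x := s)
    ((hf (χ s, s)).hasFDerivAt) hcurve
  have h2 := clm_decomp (fderiv ℝ f (χ s, s)) (deriv χ s)
  rw [show deriv χ s * pd1 f (χ s, s) + pd2 f (χ s, s) = fderiv ℝ f (χ s, s) (deriv χ s, 1) by
    simp [pd1, pd2, h2]]
  exact h

/-- the variable-coefficient interface relation for the mixed
second derivative `u_ξη⁺` at the origin, with the tangential derivatives of
the coefficients entering through `c₃ = ∂a₁₁/∂η − χ'' a₁₂` and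
`c₄ = ∂a₁₂/∂η − χ'' a₂₂`. -/
theorem stmt_13 (χ : ℝ → ℝ) (hχ : ContDiffAt ℝ 2 χ 0)
    (hχ0 : χ 0 = 0) (hχ'0 : deriv χ 0 = 0)
    (up um : ℝ × ℝ → ℝ) (hup : ContDiff ℝ 2 up) (hum : ContDiff ℝ 2 um)
    (a11p a12p a22p a11m a12m a22m : ℝ × ℝ → ℝ)
    (ha11p : ContDiff ℝ 1 a11p) (ha12p : ContDiff ℝ 1 a12p) (ha22p : ContDiff ℝ 1 a22p)
    (ha11m : ContDiff ℝ 1 a11m) (ha12m : ContDiff ℝ 1 a12m) (ha22m : ContDiff ℝ 1 a22m)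
    (hposp : ∀ p : ℝ × ℝ,
      (!![a11p p, a12p p; a12p p, a22p p] : Matrix (Fin 2) (Fin 2) ℝ).PosDef)
    (hposm : ∀ p : ℝ × ℝ,
      (!![a11m p, a12m p; a12m p, a22m p] : Matrix (Fin 2) (Fin 2) ℝ).PosDef)
    (ha0 : 0 < a11p (0, 0))
    (w : ℝ → ℝ) (hw : w = fun s => up (χ s, s) - um (χ s, s))
    (hwC2 : ContDiffAt ℝ 2 w 0)
    (v : ℝ → ℝ)
    (hv : ∀ s : ℝ, Real.sqrt (1 + deriv χ s ^ 2) * v s =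
      ((a11p (χ s, s) - deriv χ s * a12p (χ s, s)) * pd1 up (χ s, s)
          - (a11m (χ s, s) - deriv χ s * a12m (χ s, s)) * pd1 um (χ s, s))
        + ((a12p (χ s, s) - deriv χ s * a22p (χ s, s)) * pd2 up (χ s, s)
          - (a12m (χ s, s) - deriv χ s * a22m (χ s, s)) * pd2 um (χ s, s)))
    (hvC1 : ContDiffAt ℝ 1 v 0)
    (c3p c3m c4p c4m : ℝ)
    (hc3p : c3p = pd2 a11p (0, 0) - deriv (deriv χ) 0 * a12p (0, 0))
    (hc3m : c3m = pd2 a11m (0, 0) - deriv (deriv χ) 0 * a12m (0, 0))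
    (hc4p : c4p = pd2 a12p (0, 0) - deriv (deriv χ) 0 * a22p (0, 0))
    (hc4m : c4m = pd2 a12m (0, 0) - deriv (deriv χ) 0 * a22m (0, 0)) :
    pd2 (pd1 up) (0, 0) =
      ((c3m * (a11p (0, 0) - a11m (0, 0)) - a11m (0, 0) * (c3p - c3m)
          - deriv (deriv χ) 0 * a12p (0, 0) * (a11p (0, 0) - a11m (0, 0)))
        / a11p (0, 0) ^ 2) * pd1 um (0, 0)
      + ((c3p * (a12p (0, 0) - a12m (0, 0)) - a11p (0, 0) * (c4p - c4m)
          - deriv (deriv χ) 0 * a12p (0, 0) * (a12p (0, 0) - a12m (0, 0)))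
        / a11p (0, 0) ^ 2) * pd2 um (0, 0)
      - ((a12p (0, 0) - a12m (0, 0)) / a11p (0, 0)) * pd2 (pd2 um) (0, 0)
      + (a11m (0, 0) / a11p (0, 0)) * pd2 (pd1 um) (0, 0)
      + ((c3p * a12p (0, 0) - a11p (0, 0) * c4p
          - deriv (deriv χ) 0 * a12p (0, 0) ^ 2) / a11p (0, 0) ^ 2) * deriv w 0
      - (a12p (0, 0) / a11p (0, 0)) * deriv (deriv w) 0
      + ((deriv (deriv χ) 0 * a12p (0, 0) - c3p) / a11p (0, 0) ^ 2) * v 0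
      + deriv v 0 / a11p (0, 0) := by
  subst hw
  have hA : a11p (0, 0) ≠ 0 := ne_of_gt ha0
  have hχd0 : DifferentiableAt ℝ χ 0 := hχ.differentiableAt (by norm_num)
  have hχev : ∀ᶠ s in 𝓝 (0:ℝ), DifferentiableAt ℝ χ s := by
    filter_upwards [hχ.eventually (by simp)] with s hs
    exact hs.differentiableAt (by norm_num)
  have hχ'C1 : ContDiffAt ℝ 1 (deriv χ) 0 := by
    have h := hχ.fderiv_right (m := 1) (by norm_num)
    have heq : deriv χ = fun s => (fderiv ℝ χ s) 1 := rfl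
    rw [heq]
    exact h.clm_apply contDiffAt_const
  have hχ'd : HasDerivAt (deriv χ) (deriv (deriv χ) 0) 0 :=
    (hχ'C1.differentiableAt (by norm_num)).hasDerivAt
  have dup : Differentiable ℝ up := hup.differentiable (by norm_num)
  have dum : Differentiable ℝ um := hum.differentiable (by norm_num)
  have dup1 : Differentiable ℝ (pd1 up) := (contDiff_pd1 hup).differentiable (by norm_num)
  have dup2 : Differentiable ℝ (pd2 up) := (contDiff_pd2 hup).differentiable (by norm_num)
  have dum1 : Differentiable ℝ (pd1 um) := (contDiff_pd1 hum).differentiable (by norm_num)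
  have dum2 : Differentiable ℝ (pd2 um) := (contDiff_pd2 hum).differentiable (by norm_num)
  have comp0 : ∀ f : ℝ × ℝ → ℝ, Differentiable ℝ f →
      HasDerivAt (fun t => f (χ t, t)) (pd2 f (0, 0)) 0 := by
    intro f hf
    have h := hasDerivAt_comp_curve hf hχd0
    rw [hχ0, hχ'0] at h
    simpa using h
  -- E0 : value of v at 0
  have hE0 : v 0 = a11p (0, 0) * pd1 up (0, 0) + a12p (0, 0) * pd2 up (0, 0)
      - a11m (0, 0) * pd1 um (0, 0) - a12m (0, 0) * pd2 um (0, 0) := by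
    have h := hv 0
    rw [hχ0, hχ'0] at h
    norm_num [Real.sqrt_one] at h
    linear_combination h
  -- E1 : derivative of the flux relation at 0
  have hp1p := comp0 _ dup1
  have hp1m := comp0 _ dum1
  have hp2p := comp0 _ dup2
  have hp2m := comp0 _ dum2
  have ca11p := comp0 _ (ha11p.differentiable (by norm_num))
  have ca12p := comp0 _ (ha12p.differentiable (by norm_num))
  have ca22p := comp0 _ (ha22p.differentiable (by norm_num))
  have ca11m := comp0 _ (ha11m.differentiable (by norm_num))
  have ca12m := comp0 _ (ha12m.differentiable (by norm_num))
  have ca22m := comp0 _ (ha22m.differentiable (by norm_num))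
  have hRd := (((ca11p.sub (hχ'd.mul ca12p)).mul hp1p).sub
      ((ca11m.sub (hχ'd.mul ca12m)).mul hp1m)).add
      (((ca12p.sub (hχ'd.mul ca22p)).mul hp2p).sub
      ((ca12m.sub (hχ'd.mul ca22m)).mul hp2m))
  have hsq : HasDerivAt (fun s => Real.sqrt (1 + deriv χ s ^ 2))
      ((2 * deriv χ 0 ^ 1 * deriv (deriv χ) 0) / (2 * Real.sqrt (1 + deriv χ 0 ^ 2))) 0 := by
    exact HasDerivAt.sqrt ((hχ'd.pow 2).const_add 1) (by positivity)
  have hvd : HasDerivAt v (deriv v 0) 0 := (hvC1.differentiableAt (by norm_num)).hasDerivAt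
  have hLd := hsq.mul hvd
  have hvE : (fun s => ((a11p (χ s, s) - deriv χ s * a12p (χ s, s)) * pd1 up (χ s, s)
          - (a11m (χ s, s) - deriv χ s * a12m (χ s, s)) * pd1 um (χ s, s))
        + ((a12p (χ s, s) - deriv χ s * a22p (χ s, s)) * pd2 up (χ s, s)
          - (a12m (χ s, s) - deriv χ s * a22m (χ s, s)) * pd2 um (χ s, s)))
      =ᶠ[𝓝 (0:ℝ)] (fun s => Real.sqrt (1 + deriv χ s ^ 2) * v s) :=
    Filter.Eventually.of_forall fun s => (hv s).symm
  have hLd2 := hLd.congr_of_eventuallyEq hvE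
  have hE := hLd2.unique hRd
  simp only [hχ0, hχ'0, Pi.sub_apply, Pi.mul_apply, Pi.add_apply] at hE
  norm_num [Real.sqrt_one] at hE
  -- derivative of w at 0 and eventual formula
  have hwev : ∀ᶠ s in 𝓝 (0:ℝ), deriv (fun s => up (χ s, s) - um (χ s, s)) s =
      deriv χ s * (pd1 up (χ s, s) - pd1 um (χ s, s))
        + (pd2 up (χ s, s) - pd2 um (χ s, s)) := by
    filter_upwards [hχev] with s hs
    have h1 := hasDerivAt_comp_curve dup hs
    have h2 := hasDerivAt_comp_curve dum hs
    have h3 : HasDerivAt (fun t => up (χ t, t) - um (χ t, t)) _ s := h1.sub h2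
    rw [h3.deriv]
    ring
  have hw1 : deriv (fun s => up (χ s, s) - um (χ s, s)) 0
      = pd2 up (0, 0) - pd2 um (0, 0) := by
    have h := hwev.self_of_nhds
    rw [hχ0, hχ'0] at h
    simpa using h
  have hw2 : deriv (deriv (fun s => up (χ s, s) - um (χ s, s))) 0
      = deriv (deriv χ) 0 * (pd1 up (0, 0) - pd1 um (0, 0))
        + (pd2 (pd2 up) (0, 0) - pd2 (pd2 um) (0, 0)) := by
    have hEE : (deriv (fun s => up (χ s, s) - um (χ s, s)))
        =ᶠ[𝓝 (0:ℝ)] (fun s => deriv χ s * (pd1 up (χ s, s) - pd1 um (χ s, s))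
          + (pd2 up (χ s, s) - pd2 um (χ s, s))) := hwev
    rw [hEE.deriv_eq]
    have hP : HasDerivAt (fun s => pd1 up (χ s, s) - pd1 um (χ s, s))
        (pd2 (pd1 up) (0, 0) - pd2 (pd1 um) (0, 0)) 0 := hp1p.sub hp1m
    have hQ : HasDerivAt (fun s => pd2 up (χ s, s) - pd2 um (χ s, s))
        (pd2 (pd2 up) (0, 0) - pd2 (pd2 um) (0, 0)) 0 := hp2p.sub hp2m
    have hg : HasDerivAt (fun s => deriv χ s * (pd1 up (χ s, s) - pd1 um (χ s, s))
        + (pd2 up (χ s, s) - pd2 um (χ s, s))) _ 0 := (hχ'd.mul hP).add hQ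
    rw [hg.deriv, hχ0, hχ'0]
    ring
  rw [hw1, hw2, hc3p, hc3m, hc4p, hc4m]
  have hA' : a11p 0 ≠ 0 := by simpa only [Prod.mk_zero_zero] using hA
  simp only [Prod.mk_zero_zero] at hE hE0 ⊢
  field_simp
  linear_combination (-(a11p 0)) * hE + ((pd2 a11p 0 - 2 * deriv (deriv χ) 0 * a12p 0)) * hE0
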